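/- Let φ : ℝ → ℝ be continuous with range contained in (−1,1) and lim_{x→+∞} φ(x) = 1. Then for every function Ψ : {0,1}^K → [−1,1] and every ε > 0, there exist N_h ∈ ℕ, biases b_α ∈ ℝ and weight vectors w_α ∈ ℝ^K such that |∏_{α=1}^{N_h} φ(b_α + w_α^T n) − Ψ(n)| < ε for every n ∈ {0,1}^K. Moreover, N_h = 2^K suffices. -/
import Mathlib

theorem nps_universal_approximation
    (K : ℕ) (hK : 0 < K)
    (φ : ℝ → ℝ) (hφc : Continuous φ)
    (hrange : Set.range φ = Set.Ioo (-1 : ℝ) 1)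
    (h1 : Filter.Tendsto φ Filter.atTop (nhds 1))
    (Ψ : (Fin K → ℝ) → ℝ)
    (hΨ : ∀ n : Fin K → ℝ, (∀ k, n k = 0 ∨ n k = 1) → Ψ n ∈ Set.Icc (-1 : ℝ) 1)
    (ε : ℝ) (hε : 0 < ε) :
    ∃ (b : Fin (2 ^ K) → ℝ) (w : Fin (2 ^ K) → Fin K → ℝ),
      ∀ n : Fin K → ℝ, (∀ k, n k = 0 ∨ n k = 1) →
        |(∏ α, φ (b α + ∑ k, w α k * n k)) - Ψ n| < ε := by
  classical
  set M : ℕ := 2 ^ K with hM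
  -- φ values are in (-1,1)
  have hφIoo : ∀ x, φ x ∈ Set.Ioo (-1 : ℝ) 1 := by
    intro x
    rw [← hrange]; exact Set.mem_range_self x
  -- approximation of any target in [-1,1]
  have happrox : ∀ v ∈ Set.Icc (-1 : ℝ) 1, ∃ x, |φ x - v| < ε / 2 := by
    intro v hv
    set d : ℝ := min (ε/2) 1 / 2 with hd
    have hd0 : 0 < d := by positivity
    have hd1 : d < 1 := by
      have : min (ε/2) 1 ≤ 1 := min_le_right _ _
      simp only [hd]; linarith
    have hvabs : |v| ≤ 1 := abs_le.mpr ⟨hv.1, hv.2⟩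
    have hy : (1 - d) * v ∈ Set.Ioo (-1 : ℝ) 1 := by
      have : |(1 - d) * v| < 1 := by
        rw [abs_mul]
        calc |1 - d| * |v| ≤ |1 - d| * 1 := by
              exact mul_le_mul_of_nonneg_left hvabs (abs_nonneg _)
          _ = 1 - d := by rw [mul_one, abs_of_pos (by linarith)]
          _ < 1 := by linarith
      exact ⟨by linarith [(abs_lt.mp this).1], (abs_lt.mp this).2⟩
    rw [← hrange] at hy
    obtain ⟨x, hx⟩ := hy
    refine ⟨x, ?_⟩
    rw [hx]
    have : (1 - d) * v - v = -(d * v) := by ring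
    rw [this, abs_neg, abs_mul]
    have hdd : d < ε / 2 := by
      have : min (ε/2) 1 ≤ ε/2 := min_le_left _ _
      simp only [hd]; linarith
    calc |d| * |v| ≤ |d| * 1 := mul_le_mul_of_nonneg_left hvabs (abs_nonneg _)
      _ = d := by rw [mul_one, abs_of_pos hd0]
      _ < ε / 2 := hdd
  -- small δ
  set δ : ℝ := min (ε / (2 * (M + 1))) (1/2) with hδdef
  have hδ0 : 0 < δ := lt_min (by positivity) (by norm_num)
  have hδh : δ ≤ 1/2 := min_le_right _ _
  have hMδ : (M : ℝ) * δ < ε / 2 := by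
    have h1' : δ ≤ ε / (2 * (M + 1)) := min_le_left _ _
    have hM0 : (0:ℝ) < (M:ℝ) + 1 := by positivity
    calc (M : ℝ) * δ ≤ (M : ℝ) * (ε / (2 * (M + 1))) :=
          mul_le_mul_of_nonneg_left h1' (Nat.cast_nonneg _)
      _ < ε / 2 := by
          rw [mul_div_assoc', div_lt_div_iff₀ (by positivity) (by norm_num : (0:ℝ) < 2)]
          nlinarith [Nat.cast_nonneg (α := ℝ) M]
  -- threshold T
  have hev : ∀ᶠ x in Filter.atTop, 1 - δ < φ x :=
    h1.eventually (eventually_gt_nhds (by linarith))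
  obtain ⟨T, hT⟩ := Filter.eventually_atTop.mp hev
  -- choose x_m per configuration
  have hbin : ∀ m : Fin K → Fin 2, ∀ k, ((m k : ℕ) : ℝ) = 0 ∨ ((m k : ℕ) : ℝ) = 1 := by
    intro m k
    have : (m k : ℕ) = 0 ∨ (m k : ℕ) = 1 := by omega
    rcases this with h | h <;> simp [h]
  have hx : ∀ m : Fin K → Fin 2, ∃ x, |φ x - Ψ (fun k => ((m k : ℕ) : ℝ))| < ε / 2 := by
    intro m
    exact happrox _ (hΨ _ (hbin m))
  choose xf hxf using hx
  set tf : (Fin K → Fin 2) → ℝ := fun m => max 0 ((T - xf m) / 2) with htf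
  set e : (Fin K → Fin 2) ≃ Fin (2 ^ K) := finFunctionFinEquiv with he
  refine ⟨fun α => xf (e.symm α) + 2 * tf (e.symm α) * ∑ k, (((e.symm α) k : ℕ) : ℝ),
          fun α k => tf (e.symm α) * (2 - 4 * (((e.symm α) k : ℕ) : ℝ)), ?_⟩
  intro n hn
  -- reindex product
  have hre : (∏ α, φ ((fun α => xf (e.symm α) + 2 * tf (e.symm α) * ∑ k, (((e.symm α) k : ℕ) : ℝ)) α
        + ∑ k, (fun α k => tf (e.symm α) * (2 - 4 * (((e.symm α) k : ℕ) : ℝ))) α k * n k))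
      = ∏ m : Fin K → Fin 2, φ (xf m + 2 * tf m * ∑ k, ((m k : ℕ) : ℝ)
          + ∑ k, tf m * (2 - 4 * ((m k : ℕ) : ℝ)) * n k) := by
    rw [← Equiv.prod_comp e]
    simp only [Equiv.symm_apply_apply]
  rw [hre]
  -- the distance functional
  set D : (Fin K → Fin 2) → ℝ := fun m => ∑ k, ((2 - 4 * ((m k : ℕ) : ℝ)) * n k + 2 * ((m k : ℕ) : ℝ)) with hD
  have harg : ∀ m, xf m + 2 * tf m * ∑ k, ((m k : ℕ) : ℝ)
      + ∑ k, tf m * (2 - 4 * ((m k : ℕ) : ℝ)) * n k = xf m + tf m * D m := by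
    intro m
    have h2 : tf m * D m = (∑ k, tf m * (2 - 4 * ((m k : ℕ) : ℝ)) * n k)
        + 2 * tf m * ∑ k, ((m k : ℕ) : ℝ) := by
      simp only [hD, Finset.mul_sum, mul_add, Finset.sum_add_distrib]
      congr 1
      · exact Finset.sum_congr rfl fun k _ => by ring
      · exact Finset.sum_congr rfl fun k _ => by ring
    rw [h2]; ring
  simp only [harg]
  -- the index matching n
  set mc : Fin K → Fin 2 := fun k => if n k = 1 then 1 else 0 with hmc
  have hmcn : ∀ k, ((mc k : ℕ) : ℝ) = n k := by
    intro k
    rcases hn k with h | h <;> simp [hmc, h]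
  have hDmc : D mc = 0 := by
    rw [hD]
    apply Finset.sum_eq_zero
    intro k _
    rw [hmcn k]
    rcases hn k with h | h <;> rw [h] <;> ring
  have htf0 : ∀ m, 0 ≤ tf m := fun m => le_max_left _ _
  have htfT : ∀ m, T - xf m ≤ 2 * tf m := by
    intro m
    have := le_max_right (0:ℝ) ((T - xf m) / 2)
    simp only [htf]
    linarith [le_max_right (0:ℝ) ((T - xf m) / 2)]
  have hDge : ∀ m, m ≠ mc → (2:ℝ) ≤ D m := by
    intro m hne
    obtain ⟨k, hk⟩ : ∃ k, m k ≠ mc k := by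
      by_contra h
      push_neg at h
      exact hne (funext h)
    have hterm : ∀ j, (0:ℝ) ≤ (2 - 4 * ((m j : ℕ) : ℝ)) * n j + 2 * ((m j : ℕ) : ℝ) := by
      intro j
      rcases hbin m j with h | h <;> rcases hn j with h' | h' <;> rw [h, h'] <;> norm_num
    have hne' : ((m k : ℕ) : ℝ) ≠ n k := by
      rw [← hmcn k]
      intro hcast
      exact hk (Fin.val_injective (Nat.cast_injective hcast))
    have hk2 : (2:ℝ) ≤ (2 - 4 * ((m k : ℕ) : ℝ)) * n k + 2 * ((m k : ℕ) : ℝ) := by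
      rcases hbin m k with h | h <;> rcases hn k with h' | h'
      · exact absurd (h.trans h'.symm) hne'
      · rw [h, h']; norm_num
      · rw [h, h']; norm_num
      · exact absurd (h.trans h'.symm) hne'
    calc (2:ℝ) ≤ _ := hk2
      _ ≤ D m := by
        rw [hD]
        exact Finset.single_le_sum (fun j _ => hterm j) (Finset.mem_univ k)
  -- split the product
  rw [← Finset.mul_prod_erase Finset.univ _ (Finset.mem_univ mc)]
  have hAmc : φ (xf mc + tf mc * D mc) = φ (xf mc) := by rw [hDmc]; ring_nf
  rw [hAmc]
  set v : ℝ := φ (xf mc) with hv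
  set Q : ℝ := ∏ m ∈ Finset.univ.erase mc, φ (xf m + tf m * D m) with hQ
  -- bounds on each factor
  have hfac : ∀ m ∈ Finset.univ.erase mc,
      1 - δ < φ (xf m + tf m * D m) ∧ φ (xf m + tf m * D m) < 1 := by
    intro m hm
    have hne : m ≠ mc := Finset.ne_of_mem_erase hm
    have hargT : T ≤ xf m + tf m * D m := by
      have h2D : 2 * tf m ≤ tf m * D m := by
        have := mul_le_mul_of_nonneg_left (hDge m hne) (htf0 m)
        linarith
      linarith [htfT m]
    exact ⟨hT _ hargT, (hφIoo _).2⟩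
  have hδ1 : 1 - δ ≤ 1 := by linarith
  have hδpos : (0:ℝ) ≤ 1 - δ := by linarith
  have hcard : (Finset.univ.erase mc).card ≤ M := by
    calc (Finset.univ.erase mc).card ≤ Finset.univ.card := Finset.card_erase_le
      _ = Fintype.card (Fin K → Fin 2) := Finset.card_univ
      _ = M := by simp [hM]
  have hQle1 : Q ≤ 1 := by
    rw [hQ]
    apply Finset.prod_le_one
    · intro m hm
      linarith [(hfac m hm).1]
    · intro m hm
      exact (hfac m hm).2.le
  have hQge : (1 - δ) ^ M ≤ Q := by
    calc (1 - δ) ^ M ≤ (1 - δ) ^ (Finset.univ.erase mc).card :=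
          pow_le_pow_of_le_one hδpos hδ1 hcard
      _ = ∏ _m ∈ Finset.univ.erase mc, (1 - δ) := (Finset.prod_const _).symm
      _ ≤ Q := by
          rw [hQ]
          exact Finset.prod_le_prod (fun m _ => hδpos) (fun m hm => (hfac m hm).1.le)
  have hber : 1 - (M:ℝ) * δ ≤ (1 - δ) ^ M := by
    have := one_add_mul_le_pow (a := -δ) (by linarith) M
    calc 1 - (M:ℝ) * δ = 1 + (M:ℝ) * (-δ) := by ring
      _ ≤ (1 + -δ) ^ M := this
      _ = (1 - δ) ^ M := by ring_nf
  have hQ1 : 1 - ε / 2 < Q := by linarith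
  have hv1 : |v| ≤ 1 :=
    abs_le.mpr ⟨(hφIoo (xf mc)).1.le, (hφIoo (xf mc)).2.le⟩
  have hvψ : |v - Ψ n| < ε / 2 := by
    have h := hxf mc
    have hfun : (fun k => ((mc k : ℕ) : ℝ)) = n := funext hmcn
    rwa [hfun] at h
  have hsplit : |v * Q - Ψ n| ≤ |v * (Q - 1)| + |v - Ψ n| := by
    have : v * Q - Ψ n = v * (Q - 1) + (v - Ψ n) := by ring
    rw [this]
    exact abs_add_le _ _
  have hvQ : |v * (Q - 1)| < ε / 2 := by
    rw [abs_mul]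
    have hQ1' : |Q - 1| < ε / 2 := by
      rw [abs_sub_comm, abs_of_nonneg (by linarith)]
      linarith
    calc |v| * |Q - 1| ≤ 1 * |Q - 1| :=
          mul_le_mul_of_nonneg_right hv1 (abs_nonneg _)
      _ = |Q - 1| := one_mul _
      _ < ε / 2 := hQ1'
  linarith
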